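/- Let A₁, A₂, A₃ ∈ ℝ² be affinely independent, let T be their convex hull (a nondegenerate triangle), and for i ∈ {1,2,3} let e_i be the edge of T opposite the vertex A_i, |e_i| its length, and n_i the outward unit normal to e_i (the unit vector orthogonal to the direction of e_i with ⟨n_i, A_i − m⟩ < 0 for m ∈ e_i). Let v : ℝ² → ℝ² be the lowest-order Raviart–Thomas field v(x) = a + c·x with a ∈ ℝ² and c ∈ ℝ; then x ↦ ⟨v(x), n_i⟩ is constant on e_i, with value denoted (v·n_i). If ∫_T v(x) dx = 0 (equivalently, ∫_T ⟨v(x), ∇q⟩ dx = 0 for every affine q : ℝ² → ℝ), then the three scaled edge fluxes coincide: (v·n₁)|e₁| = (v·n₂)|e₂| = (v·n₃)|e₃|; if moreover ⟨v(x), n_i⟩ = 0 for all x on some edge e_i, then a = 0 and c = 0, i.e. v is identically zero. -/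

import Mathlib

open MeasureTheory

noncomputable section

private lemma inner2 (x y : EuclideanSpace ℝ (Fin 2)) :
    (inner ℝ x y : ℝ) = x 0 * y 0 + x 1 * y 1 := by
  simp [PiLp.inner_apply, Fin.sum_univ_two]; ring

private lemma sub_coord (y z : EuclideanSpace ℝ (Fin 2)) (j : Fin 2) :
    (y - z) j = y j - z j := by simp

private lemma ortho2 (w0 w1 n0 n1 : ℝ) (hw : ¬(w0 = 0 ∧ w1 = 0))
    (h : n0 * w0 + n1 * w1 = 0) : ∃ t : ℝ, n0 = -(t * w1) ∧ n1 = t * w0 := by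
  by_cases hw0 : w0 = 0
  · have hw1 : w1 ≠ 0 := fun h1 => hw ⟨hw0, h1⟩
    rw [hw0] at h
    refine ⟨-n0 / w1, ?_, ?_⟩
    · field_simp
    · have hn1 : n1 = 0 := by
        rcases mul_eq_zero.mp (by linarith : n1 * w1 = 0) with h' | h'
        · exact h'
        · exact absurd h' hw1
      simp [hw0, hn1]
  · refine ⟨n1 / w0, ?_, ?_⟩
    · field_simp; linarith [h]
    · field_simp

private lemma pair_indep (b1 b2 : EuclideanSpace ℝ (Fin 2))
    (hcross : b1 0 * b2 1 - b1 1 * b2 0 ≠ 0) :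
    LinearIndependent ℝ ![b1, b2] := by
  rw [LinearIndependent.pair_iff]
  intro s t hst
  have h0 : s * b1 0 + t * b2 0 = 0 := by
    have := congrFun (congrArg (fun (z : EuclideanSpace ℝ (Fin 2)) => (z : Fin 2 → ℝ)) hst) 0
    simpa using this
  have h1 : s * b1 1 + t * b2 1 = 0 := by
    have := congrFun (congrArg (fun (z : EuclideanSpace ℝ (Fin 2)) => (z : Fin 2 → ℝ)) hst) 1
    simpa using this
  constructor
  · by_contra hs
    apply hcross
    have e1 : s * (b1 0 * b2 1 - b1 1 * b2 0) = 0 := by linear_combination b2 1 * h0 - b2 0 * h1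
    exact (mul_eq_zero.mp e1).resolve_left hs
  · by_contra ht
    apply hcross
    have e1 : t * (b1 0 * b2 1 - b1 1 * b2 0) = 0 := by
      linear_combination - b1 1 * h0 + b1 0 * h1
    exact (mul_eq_zero.mp e1).resolve_left ht

private lemma centroid_integral (A : Fin 3 → EuclideanSpace ℝ (Fin 2))
    (G : EuclideanSpace ℝ (Fin 2))
    (hind : LinearIndependent ℝ ![A 1 - G, A 2 - G])
    (hG : A 0 + A 1 + A 2 = (3:ℝ) • G) :
    ∫ x in convexHull ℝ (Set.range A), (x - G) = 0 := by
  have hcard : Fintype.card (Fin 2) = Module.finrank ℝ (EuclideanSpace ℝ (Fin 2)) := by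
    simp [finrank_euclideanSpace_fin]
  let b : Module.Basis (Fin 2) ℝ (EuclideanSpace ℝ (Fin 2)) :=
    basisOfLinearIndependentOfCardEqFinrank hind hcard
  have hb : ⇑b = ![A 1 - G, A 2 - G] := coe_basisOfLinearIndependentOfCardEqFinrank hind hcard
  have hb0 : b 0 = A 1 - G := by rw [hb]; rfl
  have hb1 : b 1 = A 2 - G := by rw [hb]; rfl
  let L : EuclideanSpace ℝ (Fin 2) →ₗ[ℝ] EuclideanSpace ℝ (Fin 2) :=
    b.constr ℝ ![A 2 - G, -(A 1 - G) - (A 2 - G)]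
  have hL0 : L (A 1 - G) = A 2 - G := by
    have h := b.constr_basis ℝ ![A 2 - G, -(A 1 - G) - (A 2 - G)] 0
    rw [hb0] at h; exact h
  have hL1 : L (A 2 - G) = -(A 1 - G) - (A 2 - G) := by
    have h := b.constr_basis ℝ ![A 2 - G, -(A 1 - G) - (A 2 - G)] 1
    rw [hb1] at h; exact h
  have hA0G : A 0 - G = -(A 1 - G) - (A 2 - G) := by
    linear_combination (norm := module) hG
  have hL2 : L (A 0 - G) = A 1 - G := by
    rw [hA0G, map_sub, map_neg, hL0, hL1]; module
  have hsum0 : (LinearMap.id + L + L ∘ₗ L :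
      EuclideanSpace ℝ (Fin 2) →ₗ[ℝ] EuclideanSpace ℝ (Fin 2)) = 0 := by
    apply b.ext
    rw [Fin.forall_fin_two]
    constructor
    · simp only [LinearMap.add_apply, LinearMap.id_apply, LinearMap.comp_apply, hb0, hL0, hL1,
        LinearMap.zero_apply]
      module
    · have h2 : L (-(A 1 - G) - (A 2 - G)) = -(A 2 - G) - (-(A 1 - G) - (A 2 - G)) := by
        rw [map_sub, map_neg, hL0, hL1]
      simp only [LinearMap.add_apply, LinearMap.id_apply, LinearMap.comp_apply, hb1, hL1, h2,
        LinearMap.zero_apply]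
      module
  have hsum : ∀ u, u + L u + L (L u) = 0 := by
    intro u
    have := congrFun (congrArg (fun (f : EuclideanSpace ℝ (Fin 2) →ₗ[ℝ] EuclideanSpace ℝ (Fin 2))
      => ⇑f) hsum0) u
    simpa using this
  have hinj : Function.Injective L := by
    intro x y hxy
    have h0 : L (x - y) = 0 := by rw [map_sub, hxy, sub_self]
    have h1 := hsum (x - y)
    rw [h0, map_zero] at h1
    have : x - y = 0 := by simpa using h1
    exact sub_eq_zero.mp this
  have hdet : LinearMap.det L = 1 := by
    rw [← LinearMap.det_toMatrix b, Matrix.det_fin_two]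
    have hLb1 : L (b 1) = -(b 0) - b 1 := by rw [hb0, hb1, hL1]
    have hLb0 : L (b 0) = b 1 := by rw [hb0, hb1, hL0]
    have e00 : LinearMap.toMatrix b b L 0 0 = 0 := by
      simp [LinearMap.toMatrix_apply, hLb0, b.repr_self]
    have e10 : LinearMap.toMatrix b b L 1 0 = 1 := by
      simp [LinearMap.toMatrix_apply, hLb0, b.repr_self]
    have e01 : LinearMap.toMatrix b b L 0 1 = -1 := by
      simp [LinearMap.toMatrix_apply, hLb1, b.repr_self]
    have e11 : LinearMap.toMatrix b b L 1 1 = -1 := by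
      simp [LinearMap.toMatrix_apply, hLb1, b.repr_self]
    rw [e00, e10, e01, e11]; ring
  set t0 : EuclideanSpace ℝ (Fin 2) := G - L G with ht0
  let F : EuclideanSpace ℝ (Fin 2) →ᵃ[ℝ] EuclideanSpace ℝ (Fin 2) :=
    { toFun := fun x => L x + t0
      linear := L
      map_vadd' := by
        intro p v
        simp [map_add]
        abel }
  have hFA : ∀ i : Fin 3, F (A i) = A (i + 1) := by
    intro i
    have key : ∀ j k : Fin 3, L (A j - G) = A k - G → F (A j) = A k := by
      intro j k h
      show L (A j) + t0 = A k
      have h' : L (A j) - L G = A k - G := by rw [← map_sub, h]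
      rw [ht0]
      linear_combination (norm := module) h'
    fin_cases i
    · exact key 0 1 hL2
    · exact key 1 2 hL0
    · exact key 2 0 (by rw [hL1, ← hA0G])
  set T : Set (EuclideanSpace ℝ (Fin 2)) := convexHull ℝ (Set.range A) with hT
  have hTimg : F '' T = T := by
    rw [hT, AffineMap.image_convexHull]
    congr 1
    rw [← Set.range_comp]
    have hcomp : (⇑F ∘ A) = A ∘ (fun i => i + 1) := by
      funext i; exact hFA i
    rw [hcomp, Set.range_comp]
    have hsurj : Function.Surjective (fun i : Fin 3 => i + 1) := by decide
    rw [hsurj.range_eq, Set.image_univ]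
  have hTcompact : IsCompact T := (Set.finite_range A).isCompact_convexHull ℝ
  have hTmeas : MeasurableSet T := hTcompact.isClosed.measurableSet
  have hderiv : ∀ x ∈ T, HasFDerivWithinAt (⇑F) L.toContinuousLinearMap T x := by
    intro x _
    have : HasFDerivAt (fun y => L.toContinuousLinearMap y + t0) L.toContinuousLinearMap x :=
      (L.toContinuousLinearMap.hasFDerivAt).add_const t0
    exact this.hasFDerivWithinAt
  have hdet' : L.toContinuousLinearMap.det = 1 := by
    show LinearMap.det _ = 1
    rw [LinearMap.coe_toContinuousLinearMap]
    exact hdet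
  have key := integral_image_eq_integral_abs_det_fderiv_smul volume hTmeas hderiv
    (fun x _ y _ h => hinj (by
      have h' : L x + t0 = L y + t0 := h
      exact add_right_cancel h')) (fun x => x - G)
  rw [hTimg] at key
  have hFG : ∀ x, F x - G = L (x - G) := by
    intro x
    show L x + t0 - G = L (x - G)
    rw [ht0, map_sub]
    module
  have hint_sub : IntegrableOn (fun x : EuclideanSpace ℝ (Fin 2) => x - G) T volume :=
    ((continuous_id.sub continuous_const).continuousOn).integrableOn_compact hTcompact
  have key2 : ∫ x in T, (x - G) = L (∫ x in T, (x - G)) := by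
    conv_lhs => rw [key]
    simp only [hdet', hFG, abs_one, one_smul]
    have hcc := ContinuousLinearMap.integral_comp_comm L.toContinuousLinearMap hint_sub
    rw [LinearMap.coe_toContinuousLinearMap'] at hcc
    exact hcc
  set u : EuclideanSpace ℝ (Fin 2) := ∫ x in T, (x - G) with hu
  have hLu : L u = u := key2.symm
  have h3u := hsum u
  rw [hLu, hLu] at h3u
  have h3u' : (3:ℝ) • u = 0 := by linear_combination (norm := module) h3u
  rcases smul_eq_zero.mp h3u' with h | h
  · norm_num at h
  · exact h

end

/-- Elementwise core of the paper's proposition on the triviality of the kernel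
of the non-stabilized discrete bilinear form for lowest-order triangular
elements: for a lowest-order Raviart–Thomas field `v x = a + c • x` on a
nondegenerate triangle with vertices `A 0, A 1, A 2` (edge `e i` being the
segment joining `A (i+1)` and `A (i+2)`, with outward unit normal `n i`),
the function `x ↦ ⟨v x, n i⟩` is constant on each edge, and if
`∫_T v = 0` then the three scaled edge fluxes coincide; if moreover the normal
component of `v` vanishes on some edge, then `v` is identically zero. -/
theorem rt0_triangle_kernel
    (A : Fin 3 → EuclideanSpace ℝ (Fin 2))
    (hA : AffineIndependent ℝ A)
    (n : Fin 3 → EuclideanSpace ℝ (Fin 2))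
    (hn_unit : ∀ i, ‖n i‖ = 1)
    (hn_orth : ∀ i, (inner ℝ (n i) (A (i + 1) - A (i + 2)) : ℝ) = 0)
    (hn_out : ∀ i, ∀ m ∈ segment ℝ (A (i + 1)) (A (i + 2)),
      (inner ℝ (n i) (A i - m) : ℝ) < 0)
    (a : EuclideanSpace ℝ (Fin 2)) (c : ℝ)
    (v : EuclideanSpace ℝ (Fin 2) → EuclideanSpace ℝ (Fin 2))
    (hv : ∀ x, v x = a + c • x)
    (hint : ∫ x in convexHull ℝ (Set.range A), v x = 0) :
    ((∀ i j : Fin 3, ∀ mi ∈ segment ℝ (A (i + 1)) (A (i + 2)),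
        ∀ mj ∈ segment ℝ (A (j + 1)) (A (j + 2)),
        (inner ℝ (v mi) (n i) : ℝ) * dist (A (i + 1)) (A (i + 2))
          = (inner ℝ (v mj) (n j) : ℝ) * dist (A (j + 1)) (A (j + 2)))
      ∧
      (∀ i : Fin 3,
        (∀ m ∈ segment ℝ (A (i + 1)) (A (i + 2)),
          (inner ℝ (v m) (n i) : ℝ) = 0) →
        a = 0 ∧ c = 0)) := by
  classical
  set G : EuclideanSpace ℝ (Fin 2) := (3:ℝ)⁻¹ • (A 0 + A 1 + A 2) with hGdef
  have hG3 : A 0 + A 1 + A 2 = (3:ℝ) • G := by rw [hGdef]; module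
  have hGc : ∀ j : Fin 2, G j = 3⁻¹ * (A 0 j + A 1 j + A 2 j) := by
    intro j; rw [hGdef]; simp; ring
  set S : ℝ := (A 1 0 - A 0 0) * (A 2 1 - A 0 1) - (A 1 1 - A 0 1) * (A 2 0 - A 0 0) with hS
  -- edges are nondegenerate
  have hne : ∀ i : Fin 3, A (i + 1) ≠ A (i + 2) := by
    intro i h
    exact (by decide : ∀ i : Fin 3, i + 1 ≠ i + 2) i (hA.injective h)
  have hwne : ∀ i : Fin 3,
      ¬((A (i + 1) 0 - A (i + 2) 0 = 0) ∧ (A (i + 1) 1 - A (i + 2) 1 = 0)) := by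
    intro i ⟨h0, h1⟩
    apply hne i
    ext j
    fin_cases j
    · show A (i + 1) 0 = A (i + 2) 0
      linarith
    · show A (i + 1) 1 = A (i + 2) 1
      linarith
  -- coordinates of the normals
  have horth : ∀ i, n i 0 * (A (i + 1) 0 - A (i + 2) 0)
      + n i 1 * (A (i + 1) 1 - A (i + 2) 1) = 0 := by
    intro i
    have h := hn_orth i
    rw [inner2] at h
    simpa only [sub_coord] using h
  have hchoice : ∀ i, ∃ t : ℝ, n i 0 = -(t * (A (i + 1) 1 - A (i + 2) 1))
      ∧ n i 1 = t * (A (i + 1) 0 - A (i + 2) 0) :=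
    fun i => ortho2 _ _ _ _ (hwne i) (horth i)
  choose t ht0 ht1 using hchoice
  have hunit : ∀ i, n i 0 ^ 2 + n i 1 ^ 2 = 1 := by
    intro i
    have h2 : (‖n i‖:ℝ) ^ 2 = n i 0 ^ 2 + n i 1 ^ 2 := by
      rw [← real_inner_self_eq_norm_sq, inner2]; ring
    rw [hn_unit i] at h2
    simpa using h2.symm
  -- the three per-edge coordinate identities
  have e_out : ∀ i, n i 0 * (A i 0 - A (i + 1) 0) + n i 1 * (A i 1 - A (i + 1) 1)
      = -(t i * S) := by
    intro i
    fin_cases i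
    · show n 0 0 * (A 0 0 - A 1 0) + n 0 1 * (A 0 1 - A 1 1) = -(t 0 * S)
      rw [hS, ht0 0, ht1 0]
      show -(t 0 * (A 1 1 - A 2 1)) * (A 0 0 - A 1 0)
        + t 0 * (A 1 0 - A 2 0) * (A 0 1 - A 1 1) = _
      ring
    · show n 1 0 * (A 1 0 - A 2 0) + n 1 1 * (A 1 1 - A 2 1) = -(t 1 * S)
      rw [hS, ht0 1, ht1 1]
      show -(t 1 * (A 2 1 - A 0 1)) * (A 1 0 - A 2 0)
        + t 1 * (A 2 0 - A 0 0) * (A 1 1 - A 2 1) = _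
      ring
    · show n 2 0 * (A 2 0 - A 0 0) + n 2 1 * (A 2 1 - A 0 1) = -(t 2 * S)
      rw [hS, ht0 2, ht1 2]
      show -(t 2 * (A 0 1 - A 1 1)) * (A 2 0 - A 0 0)
        + t 2 * (A 0 0 - A 1 0) * (A 2 1 - A 0 1) = _
      ring
  have e_edge : ∀ i, (A (i + 1) 0 - G 0) * n i 0 + (A (i + 1) 1 - G 1) * n i 1
      = t i * S / 3 := by
    intro i
    fin_cases i
    · show (A 1 0 - G 0) * n 0 0 + (A 1 1 - G 1) * n 0 1 = t 0 * S / 3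
      rw [hS, hGc 0, hGc 1, ht0 0, ht1 0]
      show (A 1 0 - 3⁻¹ * (A 0 0 + A 1 0 + A 2 0)) * -(t 0 * (A 1 1 - A 2 1))
        + (A 1 1 - 3⁻¹ * (A 0 1 + A 1 1 + A 2 1)) * (t 0 * (A 1 0 - A 2 0)) = _
      ring
    · show (A 2 0 - G 0) * n 1 0 + (A 2 1 - G 1) * n 1 1 = t 1 * S / 3
      rw [hS, hGc 0, hGc 1, ht0 1, ht1 1]
      show (A 2 0 - 3⁻¹ * (A 0 0 + A 1 0 + A 2 0)) * -(t 1 * (A 2 1 - A 0 1))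
        + (A 2 1 - 3⁻¹ * (A 0 1 + A 1 1 + A 2 1)) * (t 1 * (A 2 0 - A 0 0)) = _
      ring
    · show (A 0 0 - G 0) * n 2 0 + (A 0 1 - G 1) * n 2 1 = t 2 * S / 3
      rw [hS, hGc 0, hGc 1, ht0 2, ht1 2]
      show (A 0 0 - 3⁻¹ * (A 0 0 + A 1 0 + A 2 0)) * -(t 2 * (A 0 1 - A 1 1))
        + (A 0 1 - 3⁻¹ * (A 0 1 + A 1 1 + A 2 1)) * (t 2 * (A 0 0 - A 1 0)) = _
      ring
  have e_norm : ∀ i, (t i) ^ 2 * ((A (i + 1) 0 - A (i + 2) 0) ^ 2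
      + (A (i + 1) 1 - A (i + 2) 1) ^ 2) = 1 := by
    intro i
    have h := hunit i
    rw [ht0 i, ht1 i] at h
    linear_combination h
  -- outward positivity
  have hpos : ∀ i, 0 < t i * S := by
    intro i
    have h := hn_out i (A (i + 1)) (left_mem_segment ℝ _ _)
    rw [inner2] at h
    simp only [sub_coord] at h
    rw [e_out i] at h
    linarith
  have hSne : S ≠ 0 := by
    intro h
    have := hpos 0
    rw [h, mul_zero] at this
    exact lt_irrefl 0 this
  -- the barycenter identity from the vanishing integral
  have hind : LinearIndependent ℝ ![A 1 - G, A 2 - G] := by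
    apply pair_indep
    have : (A 1 - G) 0 * (A 2 - G) 1 - (A 1 - G) 1 * (A 2 - G) 0 = S / 3 := by
      simp only [sub_coord, hGc 0, hGc 1, hS]
      ring
    rw [this]
    exact div_ne_zero hSne (by norm_num)
  have hcent := centroid_integral A G hind hG3
  set T : Set (EuclideanSpace ℝ (Fin 2)) := convexHull ℝ (Set.range A) with hT
  have hTcompact : IsCompact T := (Set.finite_range A).isCompact_convexHull ℝ
  have hvolpos : 0 < (volume T).toReal := by
    have htop : affineSpan ℝ T = ⊤ := by
      rw [hT, affineSpan_convexHull]
      exact hA.affineSpan_eq_top_iff_card_eq_finrank_add_one.mpr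
        (by simp [finrank_euclideanSpace_fin])
    have h1 : 0 < volume T :=
      Measure.measure_pos_of_nonempty_interior _
        ((Convex.interior_nonempty_iff_affineSpan_eq_top (convex_convexHull ℝ _)).mpr htop)
    exact ENNReal.toReal_pos h1.ne' hTcompact.measure_lt_top.ne
  have hint_sub : IntegrableOn (fun x : EuclideanSpace ℝ (Fin 2) => x - G) T volume :=
    ((continuous_id.sub continuous_const).continuousOn).integrableOn_compact hTcompact
  have hsplit : ∫ x in T, v x = (volume T).toReal • (a + c • G) := by
    have h1 : ∀ x, v x = (a + c • G) + c • (x - G) := by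
      intro x; rw [hv x]; module
    calc ∫ x in T, v x = ∫ x in T, ((a + c • G) + c • (x - G)) := by simp only [h1]
      _ = (∫ _x in T, (a + c • G)) + ∫ x in T, c • (x - G) := by
          apply integral_add
          · exact integrableOn_const hTcompact.measure_lt_top.ne
          · exact hint_sub.smul c
      _ = (volume T).toReal • (a + c • G) + c • ∫ x in T, (x - G) := by
          rw [setIntegral_const, integral_smul]; rfl
      _ = (volume T).toReal • (a + c • G) := by rw [hcent, smul_zero, add_zero]
  have hacG : a + c • G = 0 := by
    rw [hsplit] at hint
    rcases smul_eq_zero.mp hint with h | h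
    · exact absurd h hvolpos.ne'
    · exact h
  -- constancy of the normal flux along each edge
  have hconst : ∀ i, ∀ m ∈ segment ℝ (A (i + 1)) (A (i + 2)),
      (inner ℝ (v m) (n i) : ℝ) = inner ℝ (v (A (i + 1))) (n i) := by
    intro i m hm
    obtain ⟨α, β, hα, hβ, hαβ, rfl⟩ := hm
    have hdiff : v (α • A (i + 1) + β • A (i + 2)) - v (A (i + 1))
        = (c * β) • (A (i + 2) - A (i + 1)) := by
      simp only [hv]
      have hα' : α = 1 - β := by linarith
      rw [hα']; module
    have hzero : (inner ℝ (v (α • A (i + 1) + β • A (i + 2)) - v (A (i + 1))) (n i) : ℝ) = 0 := by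
      rw [hdiff, real_inner_smul_left]
      have h1 : (inner ℝ (A (i + 2) - A (i + 1)) (n i) : ℝ) = 0 := by
        have h := hn_orth i
        rw [real_inner_comm] at h
        have h2 : A (i + 2) - A (i + 1) = -(A (i + 1) - A (i + 2)) := by module
        rw [h2, inner_neg_left, h, neg_zero]
      rw [h1, mul_zero]
    have h3 : (inner ℝ (v (α • A (i + 1) + β • A (i + 2))) (n i) : ℝ)
        - inner ℝ (v (A (i + 1))) (n i) = 0 := by
      rw [← inner_sub_left]; exact hzero
    linarith
  -- value of the flux
  have hval : ∀ i, (inner ℝ (v (A (i + 1))) (n i) : ℝ) = c * (t i * S) / 3 := by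
    intro i
    have hva : v (A (i + 1)) = c • (A (i + 1) - G) := by
      rw [hv]
      linear_combination (norm := module) hacG
    rw [hva, real_inner_smul_left, inner2]
    simp only [sub_coord]
    have := e_edge i
    rw [this]
    ring
  -- |t i| * length = 1
  have hd2 : ∀ i, (t i * dist (A (i + 1)) (A (i + 2))) ^ 2 = 1 := by
    intro i
    have hdist : dist (A (i + 1)) (A (i + 2)) ^ 2
        = (A (i + 1) 0 - A (i + 2) 0) ^ 2 + (A (i + 1) 1 - A (i + 2) 1) ^ 2 := by
      rw [dist_eq_norm, ← real_inner_self_eq_norm_sq, inner2]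
      simp only [sub_coord]
      ring
    rw [mul_pow, hdist]
    exact e_norm i
  have hprod : ∀ i, t i * dist (A (i + 1)) (A (i + 2)) * S = |S| := by
    intro i
    have hdpos : 0 < dist (A (i + 1)) (A (i + 2)) := dist_pos.mpr (hne i)
    have h1 : 0 < t i * dist (A (i + 1)) (A (i + 2)) * S := by
      have := hpos i
      nlinarith
    have hfact : (t i * dist (A (i + 1)) (A (i + 2)) - 1)
        * (t i * dist (A (i + 1)) (A (i + 2)) + 1) = 0 := by
      linear_combination hd2 i
    rcases mul_eq_zero.mp hfact with h | h
    · have he : t i * dist (A (i + 1)) (A (i + 2)) = 1 := by linarith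
      rw [he, one_mul]
      rw [he, one_mul] at h1
      exact (abs_of_pos h1).symm
    · have he : t i * dist (A (i + 1)) (A (i + 2)) = -1 := by linarith
      rw [he] at h1 ⊢
      have hSneg : S < 0 := by nlinarith
      rw [abs_of_neg hSneg]; ring
  constructor
  · intro i j mi hmi mj hmj
    rw [hconst i mi hmi, hconst j mj hmj, hval i, hval j]
    linear_combination (c / 3) * hprod i - (c / 3) * hprod j
  · intro i hzero
    have h0 := hzero (A (i + 1)) (left_mem_segment ℝ _ _)
    rw [hval i] at h0
    have hc : c = 0 := by
      have h1 : c * (t i * S) = 0 := by linear_combination 3 * h0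
      rcases mul_eq_zero.mp h1 with h | h
      · exact h
      · exact absurd h (hpos i).ne'
    refine ⟨?_, hc⟩
    rw [hc, zero_smul, add_zero] at hacG
    exact hacG
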